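/- arXiv:1512.04936 — 2 statements merged into one kernel-verified Lean document; each statement's English description precedes it below -/
import Mathlib

section
/- Let r ≥ 2 be an integer, R > 0, let d be the homogeneous quasi-distance on 𝔽_{r2} with d(p,q) := inf{λ > 0 : ‖δ_{1/λ}(p⁻¹·q)‖ ≤ R}, and let a' = 1.9. There exists δ > 0 such that for all p, q ∈ 𝔽_{r2} with v_p, v_q, w_p, w_q nonzero satisfying R·‖w_p‖ > a'·‖v_p‖², R·‖w_q‖ > a'·‖v_q‖², ∠(v_p,v_q) < δ and ∠(w_p,w_q) < δ, one has d(p,q) ≤ d(0,p) or d(p,q) ≤ d(0,q). -/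
namespace Fr2

/-- Index set for the second-layer coordinates: pairs `i < j`. -/
abbrev UT (r : ℕ) := {ij : Fin r × Fin r // ij.1 < ij.2}

/-- Carrier of `𝔽_{r2}`: `p = (v_p, w_p)` with `v_p ∈ ℝ^r` and `w_p ∈ ℝ^{r(r-1)/2}`. -/
abbrev G (r : ℕ) := (Fin r → ℝ) × (UT r → ℝ)

/-- Group law of `𝔽_{r2}`. -/
noncomputable def mul {r : ℕ} (p q : G r) : G r :=
  (fun i => p.1 i + q.1 i,
   fun ij => p.2 ij + q.2 ij +
     (p.1 ij.1.1 * q.1 ij.1.2 - q.1 ij.1.1 * p.1 ij.1.2) / 2)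

/-- Group inverse of `𝔽_{r2}`. -/
noncomputable def inv {r : ℕ} (p : G r) : G r := (fun i => -p.1 i, fun ij => -p.2 ij)

/-- Dilation of factor `l`. -/
noncomputable def dil {r : ℕ} (l : ℝ) (p : G r) : G r := (fun i => l * p.1 i, fun ij => l ^ 2 * p.2 ij)

/-- Square of the Euclidean norm. -/
noncomputable def normSq {r : ℕ} (p : G r) : ℝ := (∑ i, (p.1 i) ^ 2) + ∑ ij, (p.2 ij) ^ 2

/-- The homogeneous quasi-distance whose unit ball centered at the identity is the
Euclidean ball of radius `R`. -/
noncomputable def dist (R : ℝ) {r : ℕ} (p q : G r) : ℝ :=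
  sInf {l : ℝ | 0 < l ∧ normSq (dil (1 / l) (mul (inv p) q)) ≤ R ^ 2}

end Fr2

/-- Euclidean scalar product on `ι → ℝ`. -/
def innerF {ι : Type*} [Fintype ι] (u v : ι → ℝ) : ℝ := ∑ i, u i * v i

/-- Euclidean norm on `ι → ℝ`. -/
noncomputable def normF {ι : Type*} [Fintype ι] (u : ι → ℝ) : ℝ :=
  Real.sqrt (innerF u u)

/-- The (non-oriented) Euclidean angle between two vectors, in `[0, π]`, characterized by
`cos ∠(u,v) = ⟨u,v⟩ / (‖u‖·‖v‖)`. -/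
noncomputable def angleF {ι : Type*} [Fintype ι] (u v : ι → ℝ) : ℝ :=
  Real.arccos (innerF u v / (normF u * normF v))

namespace Statement15Aux

set_option maxHeartbeats 1000000

variable {ι : Type*} [Fintype ι]

/-! ### Euclidean vector lemmas -/

lemma innerF_self_nonneg (u : ι → ℝ) : 0 ≤ innerF u u :=
  Finset.sum_nonneg fun i _ => mul_self_nonneg _

lemma normF_nonneg (u : ι → ℝ) : 0 ≤ normF u := Real.sqrt_nonneg _

lemma normF_sq (u : ι → ℝ) : normF u ^ 2 = innerF u u := Real.sq_sqrt (innerF_self_nonneg u)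

lemma innerF_self_eq_sum_sq (u : ι → ℝ) : innerF u u = ∑ i, (u i) ^ 2 :=
  Finset.sum_congr rfl fun i _ => (sq (u i)).symm

lemma innerF_comm (u v : ι → ℝ) : innerF u v = innerF v u :=
  Finset.sum_congr rfl fun i _ => mul_comm _ _

lemma innerF_self_pos {u : ι → ℝ} (hu : u ≠ 0) : 0 < innerF u u := by
  obtain ⟨i, hi⟩ := Function.ne_iff.1 hu
  rw [innerF_self_eq_sum_sq]
  exact Finset.sum_pos' (fun j _ => sq_nonneg _)
    ⟨i, Finset.mem_univ i, (sq_nonneg _).lt_of_ne' (pow_ne_zero 2 hi)⟩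

lemma normF_pos {u : ι → ℝ} (hu : u ≠ 0) : 0 < normF u :=
  Real.sqrt_pos.2 (innerF_self_pos hu)

lemma innerF_sq_le (u v : ι → ℝ) : innerF u v ^ 2 ≤ (normF u * normF v) ^ 2 := by
  rw [mul_pow, normF_sq, normF_sq, innerF_self_eq_sum_sq, innerF_self_eq_sum_sq]
  exact Finset.sum_mul_sq_le_sq_mul_sq _ _ _

lemma abs_innerF_le (u v : ι → ℝ) : |innerF u v| ≤ normF u * normF v := by
  have h := innerF_sq_le u v
  have h2 : (0:ℝ) ≤ normF u * normF v := mul_nonneg (normF_nonneg u) (normF_nonneg v)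
  nlinarith [abs_nonneg (innerF u v), sq_abs (innerF u v)]

lemma le_of_sq_le_sq' {x y : ℝ} (hx : 0 ≤ x) (hy : 0 ≤ y) (h : x ^ 2 ≤ y ^ 2) : x ≤ y := by
  nlinarith

lemma innerF_eq_cos {u v : ι → ℝ} (hu : u ≠ 0) (hv : v ≠ 0) :
    innerF u v = normF u * normF v * Real.cos (angleF u v) := by
  have hp : 0 < normF u * normF v := mul_pos (normF_pos hu) (normF_pos hv)
  have habs := abs_innerF_le u v
  have h1 : -1 ≤ innerF u v / (normF u * normF v) := by
    rw [le_div_iff₀ hp]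
    nlinarith [abs_le.1 habs]
  have h2 : innerF u v / (normF u * normF v) ≤ 1 := by
    rw [div_le_iff₀ hp]
    nlinarith [abs_le.1 habs]
  rw [angleF, Real.cos_arccos h1 h2]
  field_simp
  rw [mul_assoc, mul_div_cancel_right₀ _ hp.ne']

lemma inner_ge_of_angle_lt {u v : ι → ℝ} (hu : u ≠ 0) (hv : v ≠ 0) {δ : ℝ}
    (hδπ : δ ≤ Real.pi) (h : angleF u v < δ) :
    normF u * normF v * Real.cos δ ≤ innerF u v := by
  rw [innerF_eq_cos hu hv]
  have hmem1 : angleF u v ∈ Set.Icc 0 Real.pi := ⟨Real.arccos_nonneg _, Real.arccos_le_pi _⟩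
  have hcos : Real.cos δ ≤ Real.cos (angleF u v) :=
    (Real.strictAntiOn_cos hmem1 ⟨le_trans hmem1.1 h.le, hδπ⟩ h).le
  have := mul_pos (normF_pos hu) (normF_pos hv)
  nlinarith

lemma angleF_comm (u v : ι → ℝ) : angleF u v = angleF v u := by
  unfold angleF
  rw [innerF_comm, mul_comm]

lemma innerF_sub_self (u v : ι → ℝ) :
    innerF (fun i => u i - v i) (fun i => u i - v i)
      = innerF u u - 2 * innerF u v + innerF v v := by
  unfold innerF
  have h : ∀ i : ι, (u i - v i) * (u i - v i)
      = u i * u i - 2 * (u i * v i) + v i * v i := fun i => by ring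
  simp_rw [h, Finset.sum_add_distrib, Finset.sum_sub_distrib, ← Finset.mul_sum]

lemma normF_sub_le (u v : ι → ℝ) : normF (fun i => u i - v i) ≤ normF u + normF v := by
  apply le_of_sq_le_sq' (normF_nonneg _) (add_nonneg (normF_nonneg u) (normF_nonneg v))
  rw [normF_sq, innerF_sub_self]
  nlinarith [normF_sq u, normF_sq v, abs_le.1 (abs_innerF_le u v)]

/-! ### cross-term (Lagrange-type) bound -/

lemma sum_cross_sq (r : ℕ) (P Q : Fin r → ℝ) :
    ∑ x : Fin r × Fin r, (P x.1 * Q x.2 - Q x.1 * P x.2) ^ 2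
      = 2 * (innerF P P * innerF Q Q - innerF P Q ^ 2) := by
  rw [Fintype.sum_prod_type]
  have h : ∀ i j : Fin r, (P i * Q j - Q i * P j) ^ 2
      = P i * P i * (Q j * Q j) + Q i * Q i * (P j * P j)
        - 2 * (P i * Q i * (P j * Q j)) := fun i j => by ring
  simp_rw [h]
  simp_rw [Finset.sum_sub_distrib, Finset.sum_add_distrib, ← Finset.mul_sum, ← Finset.sum_mul]
  unfold innerF
  ring

lemma cross_le (r : ℕ) (P Q : Fin r → ℝ) :
    ∑ ij : Fr2.UT r, (P ij.1.1 * Q ij.1.2 - Q ij.1.1 * P ij.1.2) ^ 2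
      ≤ 2 * (innerF P P * innerF Q Q - innerF P Q ^ 2) := by
  classical
  have h0 : ∑ ij : Fr2.UT r, (P ij.1.1 * Q ij.1.2 - Q ij.1.1 * P ij.1.2) ^ 2
      = ∑ x ∈ Finset.univ.filter (fun x : Fin r × Fin r => x.1 < x.2),
          (P x.1 * Q x.2 - Q x.1 * P x.2) ^ 2 :=
    (Finset.sum_subtype (Finset.univ.filter (fun x : Fin r × Fin r => x.1 < x.2))
      (fun x => by simp) (fun x => (P x.1 * Q x.2 - Q x.1 * P x.2) ^ 2)).symm
  rw [h0, ← sum_cross_sq r P Q]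
  exact Finset.sum_le_sum_of_subset_of_nonneg (Finset.filter_subset _ _)
    (fun _ _ _ => sq_nonneg _)

/-! ### the radius function `lam` -/

noncomputable def lam (R V W : ℝ) : ℝ :=
  Real.sqrt ((V + Real.sqrt (V ^ 2 + 4 * R ^ 2 * W)) / (2 * R ^ 2))

lemma lam_sq {R V W : ℝ} (hR : 0 < R) (hV : 0 ≤ V) (hW : 0 ≤ W) :
    (lam R V W) ^ 2 = (V + Real.sqrt (V ^ 2 + 4 * R ^ 2 * W)) / (2 * R ^ 2) :=
  Real.sq_sqrt (div_nonneg (add_nonneg hV (Real.sqrt_nonneg _)) (by positivity))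

lemma lam_pos {R V W : ℝ} (hR : 0 < R) (hV : 0 ≤ V) (hW : 0 < W) : 0 < lam R V W := by
  apply Real.sqrt_pos.2
  apply div_pos _ (by positivity)
  have : 0 < Real.sqrt (V ^ 2 + 4 * R ^ 2 * W) := Real.sqrt_pos.2 (by positivity)
  linarith

lemma lam_eq {R V W : ℝ} (hR : 0 < R) (hV : 0 ≤ V) (hW : 0 ≤ W) :
    R ^ 2 * (lam R V W) ^ 4 = V * (lam R V W) ^ 2 + W := by
  have hD : (Real.sqrt (V ^ 2 + 4 * R ^ 2 * W)) ^ 2 = V ^ 2 + 4 * R ^ 2 * W :=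
    Real.sq_sqrt (by positivity)
  have h2 := lam_sq hR hV hW
  have h4 : (lam R V W) ^ 4 = ((lam R V W) ^ 2) ^ 2 := by ring
  rw [h4, h2]
  have hR2 : (2 * R ^ 2) ≠ 0 := by positivity
  field_simp
  rw [show R ^ 2 * 4 * W = 4 * R ^ 2 * W by ring]
  linear_combination hD

lemma lam_V_le {R V W : ℝ} (hR : 0 < R) (hV : 0 ≤ V) (hW : 0 ≤ W) :
    V ≤ R ^ 2 * (lam R V W) ^ 2 := by
  have hD : (Real.sqrt (V ^ 2 + 4 * R ^ 2 * W)) ^ 2 = V ^ 2 + 4 * R ^ 2 * W :=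
    Real.sq_sqrt (by positivity)
  have hDnn := Real.sqrt_nonneg (V ^ 2 + 4 * R ^ 2 * W)
  have h2 := lam_sq hR hV hW
  have hR2 : (0:ℝ) < 2 * R ^ 2 := by positivity
  rw [h2]
  rw [mul_div_assoc']
  rw [le_div_iff₀ hR2]
  have hDV : V ≤ Real.sqrt (V ^ 2 + 4 * R ^ 2 * W) := by
    nlinarith [sq_nonneg (Real.sqrt (V ^ 2 + 4 * R ^ 2 * W) - V),
      sq_nonneg (Real.sqrt (V ^ 2 + 4 * R ^ 2 * W) + V), mul_pos hR hR]
  nlinarith [mul_pos hR hR]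

lemma lam_mem_iff {R V W : ℝ} (hR : 0 < R) (hV : 0 ≤ V) (hW : 0 < W) (l : ℝ) :
    (0 < l ∧ V * l ^ 2 + W ≤ R ^ 2 * l ^ 4) ↔ lam R V W ≤ l := by
  have hLpos := lam_pos hR hV hW
  have hEq := lam_eq hR hV hW.le
  have hVle := lam_V_le hR hV hW.le
  set L := lam R V W
  constructor
  · rintro ⟨hl, hineq⟩
    have key : 0 ≤ (l ^ 2 - L ^ 2) * (R ^ 2 * l ^ 2 + (R ^ 2 * L ^ 2 - V)) := by
      nlinarith
    have h2 : 0 < R ^ 2 * l ^ 2 + (R ^ 2 * L ^ 2 - V) := by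
      have : 0 < R ^ 2 * l ^ 2 := by positivity
      linarith
    have hsq : L ^ 2 ≤ l ^ 2 := by nlinarith
    nlinarith
  · intro h
    have hl : 0 < l := lt_of_lt_of_le hLpos h
    refine ⟨hl, ?_⟩
    have h2 : L ^ 2 ≤ l ^ 2 := by nlinarith
    nlinarith [mul_nonneg (sub_nonneg.2 h2)
      (show (0:ℝ) ≤ R ^ 2 * l ^ 2 + (R ^ 2 * L ^ 2 - V) by
        nlinarith [mul_pos (pow_pos hR 2) (pow_pos hl 2)])]

/-! ### scalar steps for the core inequality -/

lemma step_s2 {s b : ℝ} (hs : 0 < s) (hb : 0 < b) (h : s ^ 2 ≤ (10 / 19) * (s * b) + b ^ 2) :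
    100 * s ≤ 131 * b := by nlinarith

lemma step_hC2 {X I1 C d : ℝ} (hX : 0 ≤ X) (hd : d ^ 2 ≤ 2) (hI1 : X * (1 - d ^ 2 / 2) ≤ I1)
    (hCraw : C ^ 2 ≤ (X ^ 2 - I1 ^ 2) / 2) : C ^ 2 ≤ X ^ 2 * d ^ 2 / 2 := by
  have hXnn : 0 ≤ X * (1 - d ^ 2 / 2) := mul_nonneg hX (by linarith)
  have h1 : (X * (1 - d ^ 2 / 2)) ^ 2 ≤ I1 ^ 2 := pow_le_pow_left₀ hXnn hI1 2
  nlinarith [hCraw, h1, mul_nonneg (mul_nonneg hX hX) (sq_nonneg (d ^ 2))]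

lemma step_hCle {X C d : ℝ} (hC : 0 ≤ C) (hX : 0 ≤ X) (hd : 0 ≤ d)
    (h : C ^ 2 ≤ X ^ 2 * d ^ 2 / 2) : C ≤ (71 / 100) * (X * d) := by
  have h2 : C ^ 2 ≤ ((71 / 100) * (X * d)) ^ 2 := by nlinarith [sq_nonneg (X * d)]
  exact le_of_sq_le_sq' hC (by positivity) h2

lemma step_h12 {b d l R : ℝ} (hl2 : 0 < l ^ 2) (hd0 : 0 < d)
    (s1 : b ≤ R * l ^ 2) (hdR : 100 * (R * d) ≤ 1) : b * d ≤ l ^ 2 * (1 / 100) := by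
  nlinarith [mul_le_mul_of_nonneg_right s1 hd0.le,
    mul_nonneg hl2.le (by linarith : (0:ℝ) ≤ 1 / 100 - R * d)]

lemma step_hab {a b d l : ℝ} (hd0 : 0 < d) (s5 : 10 * a ≤ 13 * b)
    (h12 : b * d ≤ l ^ 2 * (1 / 100)) : (a + b) * d ≤ (23 / 1000) * l ^ 2 := by
  nlinarith [mul_le_mul_of_nonneg_right (by linarith : a + b ≤ (23 / 10) * b) hd0.le]

lemma step_hWC2 {X a b d l : ℝ} (hX : 0 ≤ X) (hab : (a + b) * d ≤ (23 / 1000) * l ^ 2) :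
    2 * ((a + b) * ((71 / 100) * (X * d))) ≤ (4 / 100) * (X * l ^ 2) := by
  nlinarith [mul_le_mul_of_nonneg_left hab hX]

lemma step_hC2' {X R l d C : ℝ} (hX : 0 ≤ X) (hl2 : 0 < l ^ 2)
    (s6 : X ≤ (79 / 100) * (R ^ 2 * l ^ 2)) (hC2 : C ^ 2 ≤ X ^ 2 * d ^ 2 / 2)
    (hRd2 : R ^ 2 * d ^ 2 ≤ 1 / 10000) : C ^ 2 ≤ (1 / 1000) * (X * l ^ 2) := by
  have k1 : X * (X * d ^ 2) ≤ X * ((79 / 100) * (R ^ 2 * l ^ 2) * d ^ 2) :=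
    mul_le_mul_of_nonneg_left (mul_le_mul_of_nonneg_right s6 (sq_nonneg d)) hX
  have k2 : X * l ^ 2 * (R ^ 2 * d ^ 2) ≤ X * l ^ 2 * (1 / 10000) :=
    mul_le_mul_of_nonneg_left hRd2 (mul_nonneg hX hl2.le)
  nlinarith [hC2, k1, k2]

lemma step_rd {R d : ℝ} (hR : 0 ≤ R) (hd : 0 ≤ d) (h : 100 * (R * d) ≤ 1) :
    R ^ 2 * d ^ 2 ≤ 1 / 10000 := by nlinarith [mul_nonneg hR hd]

lemma step_ha2 {a b : ℝ} (ha : 0 ≤ a) (s5 : 10 * a ≤ 13 * b) : a ^ 2 ≤ (13 / 10) * (a * b) := by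
  nlinarith [mul_le_mul_of_nonneg_left s5 ha]

lemma step_xd {x d : ℝ} (hx : 0 ≤ x) (hd2 : d ^ 2 ≤ 1 / 10000) : x * d ^ 2 ≤ (1 / 10000) * x := by
  nlinarith [mul_le_mul_of_nonneg_left hd2 hx]

lemma step_h2 {Vp Wp lp l R : ℝ} (hR : 0 < R) (hlp : 0 < lp) (hl : 0 < l) (hle : lp ≤ l)
    (hp4 : R ^ 2 * lp ^ 4 = Vp * lp ^ 2 + Wp) (hpV : Vp ≤ R ^ 2 * lp ^ 2) :
    Vp * l ^ 2 + Wp ≤ R ^ 2 * l ^ 4 := by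
  have h0 : lp ^ 2 ≤ l ^ 2 := by nlinarith
  nlinarith [mul_nonneg (sub_nonneg.2 h0)
    (show (0:ℝ) ≤ R ^ 2 * l ^ 2 + (R ^ 2 * lp ^ 2 - Vp) by
      nlinarith [mul_pos (pow_pos hR 2) (pow_pos hl 2)])]

lemma step_final {A B a b l I1 W C R d : ℝ}
    (h1 : R ^ 2 * l ^ 4 = B ^ 2 * l ^ 2 + b ^ 2)
    (f1 : 2 * (W * C) ≤ (4 / 100) * (A * B * l ^ 2))
    (f2 : C ^ 2 ≤ (1 / 1000) * (A * B * l ^ 2))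
    (f3 : A * B * (1 - d ^ 2 / 2) * l ^ 2 ≤ I1 * l ^ 2)
    (f4 : A ^ 2 * l ^ 2 ≤ (131 / 190) * (a * b))
    (f5 : a ^ 2 ≤ (13 / 10) * (a * b))
    (f6 : a * b * d ^ 2 ≤ (1 / 10000) * (a * b))
    (f7 : 0 ≤ A * B * l ^ 2)
    (f8 : A * B * d ^ 2 * l ^ 2 ≤ (1 / 10000) * (A * B * l ^ 2))
    (f9 : W ^ 2 ≤ a ^ 2 + b ^ 2 - 2 * a * b + a * b * d ^ 2) :
    (A ^ 2 + B ^ 2 - 2 * I1) * l ^ 2 + (W + C) ^ 2 ≤ R ^ 2 * l ^ 4 := by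
  nlinarith [f1, f2, f3, f4, f5, f6, f7, f8, f9, h1]

lemma core {A B a b l R d I1 W C : ℝ}
    (hA : 0 < A) (hB : 0 < B) (ha : 0 < a) (hb : 0 < b) (hl : 0 < l) (hR : 0 < R)
    (hd0 : 0 < d) (hd1 : 100 * d ≤ 1) (hdR : 100 * (R * d) ≤ 1)
    (h1 : R ^ 2 * l ^ 4 = B ^ 2 * l ^ 2 + b ^ 2)
    (h2 : A ^ 2 * l ^ 2 + a ^ 2 ≤ R ^ 2 * l ^ 4)
    (h3 : 19 * A ^ 2 ≤ 10 * (R * a)) (h4 : 19 * B ^ 2 ≤ 10 * (R * b))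
    (hI1 : A * B * (1 - d ^ 2 / 2) ≤ I1)
    (hC : 0 ≤ C) (hCraw : C ^ 2 ≤ ((A * B) ^ 2 - I1 ^ 2) / 2)
    (hW : 0 ≤ W) (hW2 : W ^ 2 ≤ a ^ 2 + b ^ 2 - 2 * a * b + a * b * d ^ 2)
    (hWab : W ≤ a + b) :
    (A ^ 2 + B ^ 2 - 2 * I1) * l ^ 2 + (W + C) ^ 2 ≤ R ^ 2 * l ^ 4 := by
  have hAB : 0 < A * B := mul_pos hA hB
  have hl2 : 0 < l ^ 2 := pow_pos hl 2
  have hd2 : d ^ 2 ≤ 1 / 10000 := by nlinarith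
  have s1 : b ≤ R * l ^ 2 := by nlinarith [sq_nonneg (B * l), mul_pos hR hl2]
  have s2 : 100 * (R * l ^ 2) ≤ 131 * b := by
    refine step_s2 (mul_pos hR hl2) hb ?_
    nlinarith [h1, mul_le_mul_of_nonneg_right h4 (sq_nonneg l)]
  have s3 : A ^ 2 * l ^ 2 ≤ (131 / 190) * (a * b) := by
    nlinarith [mul_le_mul_of_nonneg_right h3 (sq_nonneg l), mul_pos ha hb,
      mul_nonneg ha.le (sub_nonneg.2 s2)]
  have s4 : B ^ 2 * l ^ 2 ≤ (131 / 190) * b ^ 2 := by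
    nlinarith [mul_le_mul_of_nonneg_right h4 (sq_nonneg l), mul_pos hb hb,
      mul_nonneg hb.le (sub_nonneg.2 s2)]
  have s5 : 10 * a ≤ 13 * b := by nlinarith [h2, h1, s4, ha, hb]
  have h66a : A ^ 2 * l ^ 2 * (B ^ 2 * l ^ 2) ≤ (131 / 190) * (a * b) * ((131 / 190) * b ^ 2) :=
    mul_le_mul s3 s4 (by positivity) (by positivity)
  have h66b : (131 / 190) * (a * b) * ((131 / 190) * b ^ 2)
      ≤ (131 / 190) ^ 2 * (13 / 10) * b ^ 4 := by
    nlinarith [mul_nonneg (sub_nonneg.2 s5) (pow_pos hb 3).le]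
  have h67 : b ^ 4 ≤ (R * l ^ 2) ^ 4 := pow_le_pow_left₀ hb.le s1 4
  have h68 : (A * B * l ^ 2) ^ 2 ≤ ((79 / 100) * (R ^ 2 * l ^ 2) * l ^ 2) ^ 2 := by
    nlinarith [h66a, h66b, h67]
  have s6 : A * B ≤ (79 / 100) * (R ^ 2 * l ^ 2) := by
    have h69 : A * B * l ^ 2 ≤ (79 / 100) * (R ^ 2 * l ^ 2) * l ^ 2 :=
      le_of_sq_le_sq' (by positivity) (by positivity) h68
    exact le_of_mul_le_mul_right h69 hl2
  have hC2 : C ^ 2 ≤ (A * B) ^ 2 * d ^ 2 / 2 := step_hC2 hAB.le (by nlinarith) hI1 hCraw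
  have hCle : C ≤ (71 / 100) * (A * B * d) := step_hCle hC hAB.le hd0.le hC2
  have hWC : 2 * (W * C) ≤ 2 * ((a + b) * ((71 / 100) * (A * B * d))) := by
    have := mul_le_mul hWab hCle hC (by positivity)
    linarith
  have h12 : b * d ≤ l ^ 2 * (1 / 100) := step_h12 hl2 hd0 s1 hdR
  have hab : (a + b) * d ≤ (23 / 1000) * l ^ 2 := step_hab hd0 s5 h12
  have hWC2 : 2 * ((a + b) * ((71 / 100) * (A * B * d))) ≤ (4 / 100) * (A * B * l ^ 2) :=
    step_hWC2 hAB.le hab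
  have hRd2 : R ^ 2 * d ^ 2 ≤ 1 / 10000 := step_rd hR.le hd0.le hdR
  have hABl : (0:ℝ) ≤ A * B * l ^ 2 := by positivity
  have hC2' : C ^ 2 ≤ (1 / 1000) * (A * B * l ^ 2) := step_hC2' hAB.le hl2 s6 hC2 hRd2
  have ha2 : a ^ 2 ≤ (13 / 10) * (a * b) := step_ha2 ha.le s5
  have habd : a * b * d ^ 2 ≤ (1 / 10000) * (a * b) := step_xd (mul_pos ha hb).le hd2
  have hI1l : A * B * (1 - d ^ 2 / 2) * l ^ 2 ≤ I1 * l ^ 2 :=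
    mul_le_mul_of_nonneg_right hI1 hl2.le
  have hABd : A * B * d ^ 2 * l ^ 2 ≤ (1 / 10000) * (A * B * l ^ 2) := by
    have h := step_xd (x := A * B * l ^ 2) hABl hd2
    linarith [h, (by ring : A * B * l ^ 2 * d ^ 2 = A * B * d ^ 2 * l ^ 2)]
  exact step_final h1 (hWC.trans hWC2) hC2' hI1l s3 ha2 habd hABl hABd hW2

/-! ### distance lemmas -/

lemma normSq_dil {r : ℕ} (l : ℝ) (hl : l ≠ 0) (z : Fr2.G r) :
    Fr2.normSq (Fr2.dil (1 / l) z)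
      = ((∑ i, (z.1 i) ^ 2) * l ^ 2 + (∑ ij, (z.2 ij) ^ 2)) / l ^ 4 := by
  unfold Fr2.normSq Fr2.dil
  simp_rw [mul_pow, ← Finset.mul_sum]
  field_simp

lemma dist_le {r : ℕ} {R : ℝ} (p q : Fr2.G r) {L : ℝ} (hL : 0 < L)
    (h : Fr2.normSq (Fr2.dil (1 / L) (Fr2.mul (Fr2.inv p) q)) ≤ R ^ 2) :
    Fr2.dist R p q ≤ L :=
  csInf_le ⟨0, fun x hx => hx.1.le⟩ ⟨hL, h⟩

lemma dist_symm {r : ℕ} (R : ℝ) (p q : Fr2.G r) : Fr2.dist R p q = Fr2.dist R q p := by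
  unfold Fr2.dist
  congr 1
  ext l
  simp only [Set.mem_setOf_eq]
  have h : Fr2.normSq (Fr2.dil (1 / l) (Fr2.mul (Fr2.inv p) q))
      = Fr2.normSq (Fr2.dil (1 / l) (Fr2.mul (Fr2.inv q) p)) := by
    unfold Fr2.normSq Fr2.dil Fr2.mul Fr2.inv
    congr 1
    · exact Finset.sum_congr rfl fun i _ => by ring
    · exact Finset.sum_congr rfl fun ij _ => by ring
  rw [h]

lemma dist_zero_eq {r : ℕ} {R : ℝ} (hR : 0 < R) (u : Fr2.G r) (hu2 : u.2 ≠ 0) :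
    Fr2.dist R 0 u = lam R (innerF u.1 u.1) (innerF u.2 u.2) := by
  have hV : 0 ≤ innerF u.1 u.1 := innerF_self_nonneg _
  have hW : 0 < innerF u.2 u.2 := innerF_self_pos hu2
  have hset : {l : ℝ | 0 < l ∧ Fr2.normSq (Fr2.dil (1 / l) (Fr2.mul (Fr2.inv 0) u)) ≤ R ^ 2}
      = Set.Ici (lam R (innerF u.1 u.1) (innerF u.2 u.2)) := by
    ext l
    simp only [Set.mem_setOf_eq, Set.mem_Ici]
    rw [← lam_mem_iff hR hV hW l]
    apply and_congr_right
    intro hl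
    have e0 : Fr2.mul (Fr2.inv (0 : Fr2.G r)) u = u := by
      unfold Fr2.mul Fr2.inv
      refine Prod.ext ?_ ?_ <;> funext x <;> simp
    rw [e0, normSq_dil l hl.ne' u]
    rw [div_le_iff₀ (by positivity)]
    rw [innerF_self_eq_sum_sq u.1, innerF_self_eq_sum_sq u.2]
  unfold Fr2.dist
  rw [hset, csInf_Ici]

/-! ### main lemma (asymmetric half) -/

lemma main_half {r : ℕ} {R : ℝ} (hR : 0 < R) (p q : Fr2.G r)
    (hp1 : p.1 ≠ 0) (hq1 : q.1 ≠ 0) (hp2 : p.2 ≠ 0) (hq2 : q.2 ≠ 0)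
    (hpP : (1.9 : ℝ) * (normF p.1) ^ 2 < R * normF p.2)
    (hqP : (1.9 : ℝ) * (normF q.1) ^ 2 < R * normF q.2)
    (hang1 : angleF p.1 q.1 < 1 / (100 * (1 + R)))
    (hang2 : angleF p.2 q.2 < 1 / (100 * (1 + R)))
    (hlam : lam R (innerF p.1 p.1) (innerF p.2 p.2)
              ≤ lam R (innerF q.1 q.1) (innerF q.2 q.2)) :
    Fr2.dist R p q ≤ Fr2.dist R 0 q := by
  have h1R : (0:ℝ) < 1 + R := by linarith
  set d : ℝ := 1 / (100 * (1 + R)) with hd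
  have hd0 : 0 < d := by positivity
  have hd1 : 100 * d ≤ 1 := by
    rw [hd, mul_one_div, div_le_one (by positivity)]
    linarith
  have hdR : 100 * (R * d) ≤ 1 := by
    rw [hd]
    rw [show R * (1 / (100 * (1 + R))) = R / (100 * (1 + R)) by ring]
    rw [mul_div_assoc', div_le_one (by positivity)]
    linarith
  have hdπ : d ≤ Real.pi := by linarith [Real.pi_gt_three]
  have hA : 0 < normF p.1 := normF_pos hp1
  have hB : 0 < normF q.1 := normF_pos hq1
  have ha : 0 < normF p.2 := normF_pos hp2
  have hb : 0 < normF q.2 := normF_pos hq2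
  set l := lam R (innerF q.1 q.1) (innerF q.2 q.2) with hldef
  have hl0 : 0 < l := lam_pos hR (innerF_self_nonneg _) (innerF_self_pos hq2)
  rw [dist_zero_eq hR q hq2]
  apply dist_le p q hl0
  -- notation
  set I1 : ℝ := innerF p.1 q.1 with hI1def
  set c : Fr2.UT r → ℝ :=
    fun ij => (p.1 ij.1.1 * q.1 ij.1.2 - q.1 ij.1.1 * p.1 ij.1.2) / 2 with hcdef
  set Dw : Fr2.UT r → ℝ := fun ij => q.2 ij - p.2 ij with hDwdef
  -- the two sums
  have e1 : ∑ i, ((Fr2.mul (Fr2.inv p) q).1 i) ^ 2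
      = (normF p.1) ^ 2 + (normF q.1) ^ 2 - 2 * I1 := by
    have : ∀ i, ((Fr2.mul (Fr2.inv p) q).1 i) ^ 2 = (q.1 i - p.1 i) ^ 2 := by
      intro i
      show (-p.1 i + q.1 i) ^ 2 = (q.1 i - p.1 i) ^ 2
      ring
    simp_rw [this]
    rw [← innerF_self_eq_sum_sq (fun i => q.1 i - p.1 i), innerF_sub_self,
      normF_sq, normF_sq, hI1def, innerF_comm q.1 p.1]
    ring
  have e2 : ∑ ij, ((Fr2.mul (Fr2.inv p) q).2 ij) ^ 2
      = innerF (fun ij => Dw ij - c ij) (fun ij => Dw ij - c ij) := by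
    rw [innerF_self_eq_sum_sq]
    apply Finset.sum_congr rfl
    intro ij _
    show (-p.2 ij + q.2 ij + ((-p.1 ij.1.1) * q.1 ij.1.2 - q.1 ij.1.1 * (-p.1 ij.1.2)) / 2) ^ 2
      = (Dw ij - c ij) ^ 2
    rw [hDwdef, hcdef]
    ring
  -- bounds
  have hI1ge : normF p.1 * normF q.1 * (1 - d ^ 2 / 2) ≤ I1 := by
    have hg := inner_ge_of_angle_lt hp1 hq1 hdπ hang1
    have hcos := Real.one_sub_sq_div_two_le_cos (x := d)
    nlinarith [mul_pos hA hB]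
  have hI2ge : normF p.2 * normF q.2 * (1 - d ^ 2 / 2) ≤ innerF p.2 q.2 := by
    have hg := inner_ge_of_angle_lt hp2 hq2 hdπ hang2
    have hcos := Real.one_sub_sq_div_two_le_cos (x := d)
    nlinarith [mul_pos ha hb]
  have hW2 : (normF Dw) ^ 2 ≤ (normF p.2) ^ 2 + (normF q.2) ^ 2
      - 2 * normF p.2 * normF q.2 + normF p.2 * normF q.2 * d ^ 2 := by
    have e := innerF_sub_self q.2 p.2
    have hsq : (normF Dw) ^ 2
        = innerF q.2 q.2 - 2 * innerF q.2 p.2 + innerF p.2 p.2 := by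
      rw [normF_sq]
      exact e
    rw [hsq, ← normF_sq, ← normF_sq, innerF_comm q.2 p.2]
    nlinarith [hI2ge]
  have hWab : normF Dw ≤ normF p.2 + normF q.2 := by
    have := normF_sub_le q.2 p.2
    linarith
  have hCraw : (normF c) ^ 2 ≤ ((normF p.1 * normF q.1) ^ 2 - I1 ^ 2) / 2 := by
    have ec : innerF c c
        = (∑ ij : Fr2.UT r,
            (p.1 ij.1.1 * q.1 ij.1.2 - q.1 ij.1.1 * p.1 ij.1.2) ^ 2) / 4 := by
      rw [innerF_self_eq_sum_sq, Finset.sum_div]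
      apply Finset.sum_congr rfl
      intro ij _
      rw [hcdef]
      ring
    have hcr := cross_le r p.1 q.1
    rw [normF_sq, ec, mul_pow, normF_sq, normF_sq]
    rw [hI1def]
    linarith
  -- lam properties
  have h1' : R ^ 2 * l ^ 4 = (normF q.1) ^ 2 * l ^ 2 + ((normF q.2) ^ 2) ^ 1 := by
    rw [normF_sq, normF_sq, pow_one]
    exact lam_eq hR (innerF_self_nonneg _) (innerF_self_pos hq2).le
  have h1'' : R ^ 2 * l ^ 4 = (normF q.1) ^ 2 * l ^ 2 + (normF q.2) ^ 2 := by
    rw [h1']; ring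
  have hp4 := lam_eq hR (innerF_self_nonneg p.1) (innerF_self_pos hp2).le
  have hpV := lam_V_le hR (innerF_self_nonneg p.1) (innerF_self_pos hp2).le
  have hppos := lam_pos hR (innerF_self_nonneg p.1) (innerF_self_pos hp2)
  have h2' : (normF p.1) ^ 2 * l ^ 2 + (normF p.2) ^ 2 ≤ R ^ 2 * l ^ 4 := by
    rw [normF_sq, normF_sq]
    exact step_h2 hR hppos hl0 hlam hp4 hpV
  have h3' : 19 * (normF p.1) ^ 2 ≤ 10 * (R * normF p.2) := by nlinarith [hpP]
  have h4' : 19 * (normF q.1) ^ 2 ≤ 10 * (R * normF q.2) := by nlinarith [hqP]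
  -- the core inequality
  have hcore := core hA hB ha hb hl0 hR hd0 hd1 hdR h1'' h2' h3' h4' hI1ge
    (normF_nonneg c) hCraw (normF_nonneg Dw) hW2 hWab
  -- wrap up
  have hS2le : innerF (fun ij => Dw ij - c ij) (fun ij => Dw ij - c ij)
      ≤ (normF Dw + normF c) ^ 2 := by
    rw [← normF_sq]
    exact pow_le_pow_left₀ (normF_nonneg _) (normF_sub_le Dw c) 2
  rw [normSq_dil l hl0.ne' (Fr2.mul (Fr2.inv p) q), div_le_iff₀ (by positivity)]
  rw [e1, e2]
  nlinarith [hcore, hS2le, pow_pos hl0 2]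

end Statement15Aux

/-- Lemma for points inside the parabolic region `𝓟_{a'}`, `a' = 1.9`. -/
theorem statement15 (r : ℕ) (hr : 2 ≤ r) (R : ℝ) (hR : 0 < R) :
    ∃ δ : ℝ, 0 < δ ∧ ∀ p q : Fr2.G r,
      p.1 ≠ 0 → q.1 ≠ 0 → p.2 ≠ 0 → q.2 ≠ 0 →
      ((1.9 : ℝ) * (normF p.1) ^ 2 < R * normF p.2) →
      ((1.9 : ℝ) * (normF q.1) ^ 2 < R * normF q.2) →
      angleF p.1 q.1 < δ → angleF p.2 q.2 < δ →
      Fr2.dist R p q ≤ Fr2.dist R 0 p ∨ Fr2.dist R p q ≤ Fr2.dist R 0 q := by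
  refine ⟨1 / (100 * (1 + R)), by positivity, ?_⟩
  intro p q hp1 hq1 hp2 hq2 hpP hqP hang1 hang2
  rcases le_total (Statement15Aux.lam R (innerF p.1 p.1) (innerF p.2 p.2))
    (Statement15Aux.lam R (innerF q.1 q.1) (innerF q.2 q.2)) with h | h
  · exact Or.inr
      (Statement15Aux.main_half hR p q hp1 hq1 hp2 hq2 hpP hqP hang1 hang2 h)
  · refine Or.inl ?_
    rw [Statement15Aux.dist_symm R p q]
    exact Statement15Aux.main_half hR q p hq1 hp1 hq2 hp2 hqP hpP
      (by rwa [Statement15Aux.angleF_comm q.1 p.1])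
      (by rwa [Statement15Aux.angleF_comm q.2 p.2]) h
end

section
/- Let r ≥ 2 be an integer, R > 0, let d be the homogeneous quasi-distance on 𝔽_{r2} with d(p,q) := inf{λ > 0 : ‖δ_{1/λ}(p⁻¹·q)‖ ≤ R}, and let a = 0.9, a' = 1.9. There exists δ > 0 such that for all p, q ∈ 𝔽_{r2} with v_p, v_q, w_p, w_q nonzero satisfying a·‖v_p‖² < R·‖w_p‖ ≤ a'·‖v_p‖², a·‖v_q‖² < R·‖w_q‖ ≤ a'·‖v_q‖², ∠(v_p,v_q) < δ and ∠(w_p,w_q) < δ, one has d(p,q) ≤ d(0,p) or d(p,q) ≤ d(0,q). -/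
/-! ### Auxiliary lemmas -/

lemma normF_sq {ι : Type*} [Fintype ι] (u : ι → ℝ) : normF u ^ 2 = ∑ i, u i ^ 2 := by
  unfold normF innerF
  rw [Real.sq_sqrt (Finset.sum_nonneg fun i _ => mul_self_nonneg _)]
  exact Finset.sum_congr rfl fun i _ => (pow_two (u i)).symm

lemma normF_pos {ι : Type*} [Fintype ι] {u : ι → ℝ} (hu : u ≠ 0) : 0 < normF u := by
  have : ∃ i, u i ≠ 0 := by
    by_contra h; push_neg at h; exact hu (funext h)
  obtain ⟨i, hi⟩ := this
  unfold normF innerF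
  exact Real.sqrt_pos.2 (Finset.sum_pos' (fun j _ => mul_self_nonneg _)
    ⟨i, Finset.mem_univ i, mul_self_pos.2 hi⟩)

lemma innerF_ge_of_angle_lt {ι : Type*} [Fintype ι] {u v : ι → ℝ} (hu : u ≠ 0) (hv : v ≠ 0)
    {δ : ℝ} (hδ : δ ≤ 1) (h : angleF u v < δ) :
    Real.cos δ * (normF u * normF v) ≤ innerF u v := by
  have hnu := normF_pos hu
  have hnv := normF_pos hv
  have hcs : (innerF u v) ^ 2 ≤ (normF u * normF v) ^ 2 := by
    have h1 : (innerF u v)^2 ≤ (∑ i, u i ^2) * (∑ i, v i ^2) :=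
      Finset.sum_mul_sq_le_sq_mul_sq Finset.univ u v
    rw [mul_pow, normF_sq, normF_sq]; exact h1
  set x := innerF u v / (normF u * normF v) with hx
  have hnuv : 0 < normF u * normF v := mul_pos hnu hnv
  have hx1 : -1 ≤ x := by
    rw [hx, le_div_iff₀ hnuv]
    nlinarith [sq_nonneg (innerF u v + normF u * normF v)]
  have hx2 : x ≤ 1 := by
    rw [hx, div_le_iff₀ hnuv]
    nlinarith [sq_nonneg (innerF u v - normF u * normF v)]
  have hδπ : δ ≤ Real.pi := le_trans hδ (by linarith [Real.pi_gt_three])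
  have harc : 0 ≤ angleF u v := Real.arccos_nonneg _
  have hcos : Real.cos δ < Real.cos (angleF u v) := by
    apply Real.strictAntiOn_cos ⟨harc, (Real.arccos_le_pi _)⟩ ⟨by linarith, hδπ⟩ h
  rw [angleF, Real.cos_arccos hx1 hx2] at hcos
  calc Real.cos δ * (normF u * normF v) ≤ x * (normF u * normF v) := by
        apply mul_le_mul_of_nonneg_right (le_of_lt hcos) (le_of_lt hnuv)
    _ = innerF u v := by rw [hx]; exact div_mul_cancel₀ _ (ne_of_gt hnuv)

lemma angleF_comm {ι : Type*} [Fintype ι] (u v : ι → ℝ) : angleF u v = angleF v u := by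
  unfold angleF innerF
  rw [mul_comm (normF u), Finset.sum_congr rfl fun i _ => mul_comm (u i) (v i)]

lemma lagrangeF {n : ℕ} (f g : Fin n → ℝ) :
    ∑ i, ∑ j, (f i * g j - g i * f j)^2
      = 2*((∑ i, f i ^2) * (∑ i, g i ^2) - (∑ i, f i * g i)^2) := by
  have hinner : ∀ i, ∑ j, (f i * g j - g i * f j)^2
      = f i ^2 * (∑ j, g j ^2) + g i ^2 * (∑ j, f j ^2)
        - (2 * (f i * g i)) * (∑ j, f j * g j) := by
    intro i
    rw [Finset.mul_sum, Finset.mul_sum, Finset.mul_sum, ← Finset.sum_add_distrib,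
      ← Finset.sum_sub_distrib]
    exact Finset.sum_congr rfl fun j _ => by ring
  rw [Finset.sum_congr rfl fun i _ => hinner i]
  rw [Finset.sum_sub_distrib, Finset.sum_add_distrib, ← Finset.sum_mul, ← Finset.sum_mul,
    ← Finset.sum_mul]
  have h2 : ∑ x, 2 * (f x * g x) = 2 * ∑ x, f x * g x := (Finset.mul_sum _ _ _).symm
  rw [h2]
  ring

namespace Fr2

lemma normSq_dil_mul {r : ℕ} (l : ℝ) (p q : G r) :
    normSq (dil l (mul (inv p) q)) =
      l^2 * ∑ i, (q.1 i - p.1 i)^2 +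
      l^4 * ∑ ij : UT r, (q.2 ij - p.2 ij
        + (q.1 ij.1.1 * p.1 ij.1.2 - p.1 ij.1.1 * q.1 ij.1.2)/2)^2 := by
  unfold normSq dil mul inv
  rw [Finset.mul_sum, Finset.mul_sum]
  exact congrArg₂ (· + ·)
    (Finset.sum_congr rfl fun i _ => by ring)
    (Finset.sum_congr rfl fun ij _ => by ring)

lemma dist_le (R : ℝ) {r : ℕ} (p q : G r) {l : ℝ} (hl : 0 < l)
    (h : normSq (dil (1 / l) (mul (inv p) q)) ≤ R ^ 2) : dist R p q ≤ l :=
  csInf_le ⟨0, fun x hx => le_of_lt hx.1⟩ ⟨hl, h⟩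

lemma dist_symm (R : ℝ) {r : ℕ} (p q : G r) : dist R p q = dist R q p := by
  unfold dist
  congr 1
  ext l
  have h : ∀ a b : G r, normSq (dil (1/l) (mul (inv a) b)) = normSq (dil (1/l) (mul (inv b) a)) := by
    intro a b
    rw [normSq_dil_mul, normSq_dil_mul]
    exact congrArg₂ (· + ·)
      (congrArg _ (Finset.sum_congr rfl fun i _ => by ring))
      (congrArg _ (Finset.sum_congr rfl fun ij _ => by ring))
  simp only [Set.mem_setOf_eq, h p q]

lemma root_spec {R U A : ℝ} (hR : 0 < R) (hU0 : 0 ≤ U) (hA0 : 0 < A) :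
    0 < sInf {l : ℝ | 0 < l ∧ (1/l)^2 * U + (1/l)^4 * A ≤ R^2} ∧
      R^2 * (sInf {l : ℝ | 0 < l ∧ (1/l)^2 * U + (1/l)^4 * A ≤ R^2})^4
        = U * (sInf {l : ℝ | 0 < l ∧ (1/l)^2 * U + (1/l)^4 * A ≤ R^2})^2 + A := by
  have hs2 : (Real.sqrt (U^2 + 4*R^2*A))^2 = U^2 + 4*R^2*A := Real.sq_sqrt (by positivity)
  have hs0 : 0 ≤ Real.sqrt (U^2 + 4*R^2*A) := Real.sqrt_nonneg _
  set s : ℝ := Real.sqrt (U^2 + 4*R^2*A) with hsdef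
  clear_value s
  have hsU : U < s := by
    by_contra h
    push_neg at h
    nlinarith [mul_le_mul h h hs0 hU0, mul_pos (mul_pos hR hR) hA0]
  set m : ℝ := (U + s)/(2*R^2) with hm
  clear_value m
  have hm0 : 0 < m := by
    rw [hm]; apply div_pos (by linarith) (by positivity)
  have h1 : 2 * R^2 * m = U + s := by
    rw [hm]; field_simp
  have hroot : R^2 * m^2 = U * m + A := by
    have h2 : (4*R^2) * (R^2 * m^2) = (4*R^2) * (U * m + A) := by
      linear_combination (2*R^2*m - U + s) * h1 + hs2
    exact mul_left_cancel₀ (by positivity : (4*R^2:ℝ) ≠ 0) h2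
  have hRmU : U < R^2 * m := by nlinarith
  have hlam2 : (Real.sqrt m)^2 = m := Real.sq_sqrt (le_of_lt hm0)
  have hlam0 : 0 < Real.sqrt m := Real.sqrt_pos.2 hm0
  set lam : ℝ := Real.sqrt m with hlamdef
  clear_value lam
  have hSet : {l : ℝ | 0 < l ∧ (1/l)^2 * U + (1/l)^4 * A ≤ R^2} = Set.Ici lam := by
    ext l
    simp only [Set.mem_setOf_eq, Set.mem_Ici]
    constructor
    · rintro ⟨hl, hle⟩
      have hl4 : (0:ℝ) < l^4 := by positivity
      have e : ((1/l)^2 * U + (1/l)^4 * A) * l^4 = U * l^2 + A := by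
        field_simp
      have key : U * l^2 + A ≤ R^2 * l^4 := by
        have := mul_le_mul_of_nonneg_right hle (le_of_lt hl4)
        rw [e] at this; linarith
      have hml : m ≤ l^2 := by
        by_contra hlt
        push_neg at hlt
        have hfac : 0 < R^2*(l^2+m) - U := by nlinarith
        nlinarith [mul_pos (sub_pos.2 hlt) hfac]
      calc lam = Real.sqrt m := hlamdef
        _ ≤ Real.sqrt (l^2) := Real.sqrt_le_sqrt hml
        _ = l := Real.sqrt_sq (le_of_lt hl)
    · intro hle
      have hl : 0 < l := lt_of_lt_of_le hlam0 hle
      refine ⟨hl, ?_⟩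
      have hml : m ≤ l^2 := by
        calc m = lam^2 := hlam2.symm
          _ ≤ l^2 := by nlinarith
      have key : U * l^2 + A ≤ R^2 * l^4 := by
        nlinarith [mul_nonneg (sub_nonneg.2 hml)
          (le_of_lt (show (0:ℝ) < R^2*(l^2+m) - U by nlinarith))]
      have hl4 : (0:ℝ) < l^4 := by positivity
      have e : ((1/l)^2 * U + (1/l)^4 * A) * l^4 = U * l^2 + A := by
        field_simp
      have : ((1/l)^2 * U + (1/l)^4 * A) * l^4 ≤ R^2 * l^4 := by rw [e]; linarith
      exact le_of_mul_le_mul_right this hl4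
  rw [hSet, csInf_Ici]
  refine ⟨hlam0, ?_⟩
  have h4 : lam^4 = m^2 := by rw [show lam^4 = (lam^2)^2 by ring, hlam2]
  rw [h4, hlam2, hroot]

lemma dist_zero_spec (R : ℝ) (hR : 0 < R) {r : ℕ} (p : G r) (hw : p.2 ≠ 0) :
    0 < dist R 0 p ∧
      R^2 * (dist R 0 p)^4 = (normF p.1)^2 * (dist R 0 p)^2 + (normF p.2)^2 := by
  have hU0 : 0 ≤ ∑ i, p.1 i ^2 := Finset.sum_nonneg fun i _ => sq_nonneg _
  have hA0 : 0 < ∑ ij, p.2 ij ^2 := by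
    have : ∃ ij, p.2 ij ≠ 0 := by
      by_contra h; push_neg at h; exact hw (funext h)
    obtain ⟨ij, hij⟩ := this
    exact Finset.sum_pos' (fun j _ => sq_nonneg _) ⟨ij, Finset.mem_univ ij, by positivity⟩
  have hcomp : ∀ l : ℝ, normSq (dil (1 / l) (mul (inv 0) p))
      = (1/l)^2 * (∑ i, p.1 i ^2) + (1/l)^4 * (∑ ij, p.2 ij ^2) := by
    intro l
    rw [normSq_dil_mul]
    exact congrArg₂ (· + ·)
      (congrArg _ (Finset.sum_congr rfl fun i _ => by
        simp only [Prod.fst_zero, Pi.zero_apply, sub_zero]))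
      (congrArg _ (Finset.sum_congr rfl fun ij _ => by
        simp only [Prod.fst_zero, Prod.snd_zero, Pi.zero_apply, sub_zero, mul_zero,
          zero_mul, sub_self, zero_div, add_zero]))
  have hset : {l : ℝ | 0 < l ∧ normSq (dil (1 / l) (mul (inv 0) p)) ≤ R ^ 2}
      = {l : ℝ | 0 < l ∧ (1/l)^2 * (∑ i, p.1 i ^2) + (1/l)^4 * (∑ ij, p.2 ij ^2) ≤ R^2} := by
    ext l
    simp only [Set.mem_setOf_eq, hcomp l]
  rw [normF_sq, normF_sq, dist, hset]
  exact root_spec hR hU0 hA0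

set_option maxHeartbeats 4000000 in
lemma arith {R d u t a b lam mu Iv Iw V D S C2 : ℝ}
    (hR : 0 < R) (hd0 : 0 < d) (hd1 : d ≤ 1/10) (hdR : d * R ≤ 1/56)
    (hu0 : 0 < u) (ht0 : 0 < t) (ha0 : 0 < a) (hb0 : 0 < b)
    (hlam0 : 0 < lam) (hmu0 : 0 < mu)
    (hlameq : R^2*lam^4 = u^2*lam^2 + a^2) (hmueq : R^2*mu^4 = t^2*mu^2 + b^2)
    (hle : mu ≤ lam)
    (hpreg1 : (0.9:ℝ)*u^2 < R*a) (hpreg2 : R*a ≤ (1.9:ℝ)*u^2)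
    (hIv : (1-d^2)*(u*t) ≤ Iv) (hIw : (1-d^2)*(a*b) ≤ Iw)
    (hV : V = t^2 + u^2 - 2*Iv) (hD : D = b^2 + a^2 - 2*Iw)
    (hS2 : S^2 ≤ D*C2) (hC2b : C2 ≤ (1/2)*(t^2*u^2 - Iv^2)) (hC20 : 0 ≤ C2) :
    V*lam^2 + (D + 2*S + C2) ≤ R^2*lam^4 := by
  have hd2 : d^2 ≤ 1/100 := by
    have := mul_le_mul hd1 hd1 (le_of_lt hd0) (by norm_num)
    linarith [this]
  have hIvpos : 0 ≤ Iv := by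
    have h0 : (0:ℝ) ≤ (1-d^2)*(u*t) :=
      mul_nonneg (by linarith) (le_of_lt (mul_pos hu0 ht0))
    linarith
  have hIwpos : 0 ≤ Iw := by
    have h0 : (0:ℝ) ≤ (1-d^2)*(a*b) :=
      mul_nonneg (by linarith) (le_of_lt (mul_pos ha0 hb0))
    linarith
  have hC2d : C2 ≤ d^2 * (u^2*t^2) := by
    have h0 : (0:ℝ) ≤ (1-d^2)*(u*t) :=
      mul_nonneg (by linarith) (le_of_lt (mul_pos hu0 ht0))
    have hIvsq := mul_self_le_mul_self h0 hIv
    have hd4 : (0:ℝ) ≤ d^2*d^2*(u^2*t^2) := by positivity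
    linarith [hC2b, hIvsq, hd4]
  -- H2 : q-ball inequality at radius lam
  have h1 : mu^2 ≤ lam^2 := by
    have := mul_self_le_mul_self (le_of_lt hmu0) hle
    linarith [this]
  have h2 : t^2 ≤ R^2 * mu^2 := by
    apply le_of_mul_le_mul_right _ (mul_pos hmu0 hmu0)
    calc t^2*(mu*mu) = t^2*mu^2 := by ring
      _ ≤ R^2*mu^4 := by linarith [pow_pos hb0 2]
      _ = R^2*mu^2*(mu*mu) := by ring
  have hH2 : t^2 * lam^2 + b^2 ≤ R^2 * lam^4 := by
    have A1 := mul_nonneg (sub_nonneg.2 h1) (sub_nonneg.2 h2)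
    have A2 := mul_nonneg (sub_nonneg.2 h1) (mul_nonneg (sq_nonneg R) (sq_nonneg lam))
    linarith [A1, A2]
  have hcs : t^2*lam^2 + b^2 ≤ u^2*lam^2 + a^2 := by linarith
  -- margins
  have hA : t ≤ 1.8 * u := by
    by_contra h
    push_neg at h
    have ht2 : 3.24*u^2 < t^2 := by
      linarith [mul_lt_mul'' h h (by positivity : (0:ℝ) ≤ 1.8*u) (by positivity : (0:ℝ) ≤ 1.8*u)]
    have ha2 : 2.24*(u^2*lam^2) ≤ a^2 := by
      linarith [mul_le_mul_of_nonneg_right (le_of_lt ht2) (sq_nonneg lam), sq_nonneg b]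
    have hRl : 3.24*u^2 ≤ R^2*lam^2 := by
      apply le_of_mul_le_mul_right _ (mul_pos hlam0 hlam0)
      nlinarith [ha2]
    have F1 := mul_le_mul_of_nonneg_left ha2 (sq_nonneg R)
    have F2 := mul_le_mul_of_nonneg_left hRl (by positivity : (0:ℝ) ≤ 2.24*u^2)
    have F3 := mul_le_mul hpreg2 hpreg2 (mul_nonneg (le_of_lt hR) (le_of_lt ha0)) (by positivity)
    linarith [F1, F2, F3, pow_pos hu0 4]
  have hB : b ≤ 1.8 * a := by
    by_contra h
    push_neg at h
    have hb2 : 3.24*a^2 < b^2 := by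
      linarith [mul_lt_mul'' h h (by positivity : (0:ℝ) ≤ 1.8*a) (by positivity : (0:ℝ) ≤ 1.8*a)]
    have hu2 : 2.24*a^2 ≤ u^2*lam^2 := by
      linarith [mul_nonneg (sq_nonneg t) (sq_nonneg lam)]
    have hRl2 : 2.24*(R^2*lam^2) ≤ 3.24*u^2 := by
      apply le_of_mul_le_mul_right _ (mul_pos hlam0 hlam0)
      nlinarith [hu2]
    have F1 := mul_le_mul_of_nonneg_left hu2 (by positivity : (0:ℝ) ≤ 2.24*R^2)
    have F2 := mul_le_mul_of_nonneg_left hRl2 (sq_nonneg u)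
    have F3 := mul_self_lt_mul_self (by positivity : (0:ℝ) ≤ 0.9*u^2) hpreg1
    linarith [F1, F2, F3, pow_pos hu0 4]
  -- upper bounds from the p-root equation
  have haR : a ≤ R*lam^2 := by
    have ha2R : a^2 ≤ (R*lam^2)^2 := by
      linarith [mul_nonneg (sq_nonneg u) (sq_nonneg lam)]
    nlinarith [ha2R, (show (0:ℝ) < a + R*lam^2 by positivity)]
  have huR : u^2 ≤ R^2*lam^2 := by
    apply le_of_mul_le_mul_right _ (mul_pos hlam0 hlam0)
    linarith [sq_nonneg a, hlameq]
  -- bound S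
  have hDb : D ≤ (a+b)^2 := by linarith [mul_pos ha0 hb0]
  have hDC : D*C2 ≤ ((a+b)*(d*(u*t)))^2 := by
    calc D*C2 ≤ (a+b)^2 * (d^2*(u^2*t^2)) := mul_le_mul hDb hC2d hC20 (sq_nonneg _)
      _ = ((a+b)*(d*(u*t)))^2 := by ring
  have hSb : S ≤ (a+b)*(d*(u*t)) := by
    have hRHS0 : (0:ℝ) ≤ (a+b)*(d*(u*t)) := by positivity
    nlinarith [hS2, hDC, hRHS0]
  -- expanded bounds
  have hVb : V*lam^2 ≤ ((t-u)^2 + 2*d^2*(u*t))*lam^2 := by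
    have hVin : V ≤ (t-u)^2 + 2*d^2*(u*t) := by linarith [hV, hIv]
    exact mul_le_mul_of_nonneg_right hVin (sq_nonneg lam)
  have hDbb : D ≤ (b-a)^2 + 2*d^2*(a*b) := by linarith [hD, hIw]
  have ht2 : t^2 ≤ 1.8*(u*t) := by
    linarith [mul_le_mul_of_nonneg_right hA (le_of_lt ht0)]
  have hb2 : b^2 ≤ 1.8*(a*b) := by
    linarith [mul_le_mul_of_nonneg_right hB (le_of_lt hb0)]
  have ht2l := mul_le_mul_of_nonneg_right ht2 (sq_nonneg lam)
  have hut0 : (0:ℝ) ≤ u*t*lam^2 := by positivity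
  have hab0 : (0:ℝ) ≤ a*b := by positivity
  have m1 : 2*d^2*(a*b) ≤ 0.02*(a*b) := by
    linarith [mul_nonneg (sub_nonneg.2 hd2) hab0]
  have m2 : (2*d^2*(u*t))*lam^2 ≤ 0.02*(u*t*lam^2) := by
    linarith [mul_nonneg (sub_nonneg.2 hd2) hut0]
  have m3 : 2*((a+b)*(d*(u*t))) ≤ 0.1*(u*t*lam^2) := by
    have habl : a + b ≤ 2.8*(R*lam^2) := by linarith
    have hd0' : (0:ℝ) ≤ d*(u*t) := by positivity
    have h5 := mul_le_mul_of_nonneg_right habl hd0'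
    have h6 := mul_le_mul_of_nonneg_right hdR hut0
    linarith [h5, h6]
  have m4 : d^2*(u^2*t^2) ≤ 0.001*(u*t*lam^2) := by
    have h7 : u^2*t^2 ≤ (R^2*lam^2)*(1.8*(u*t)) :=
      mul_le_mul huR ht2 (sq_nonneg t) (by positivity)
    have hdR2 : d^2*R^2 ≤ 1/3136 := by
      linarith [mul_le_mul hdR hdR (mul_nonneg (le_of_lt hd0) (le_of_lt hR)) (by norm_num)]
    linarith [mul_le_mul_of_nonneg_left h7 (sq_nonneg d),
      mul_le_mul_of_nonneg_right hdR2 hut0]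
  linarith [hVb, hDbb, hSb, hC2d, m1, m2, m3, m4, ht2l, hb2, hut0, hab0, hlameq]

set_option maxHeartbeats 1000000 in
lemma key {r : ℕ} {R : ℝ} (hR : 0 < R) {d : ℝ} (hd1 : d ≤ 1/10) (hdR : d * R ≤ 1/56)
    (p q : G r) (hp1 : p.1 ≠ 0) (hq1 : q.1 ≠ 0) (hp2 : p.2 ≠ 0) (hq2 : q.2 ≠ 0)
    (hpreg1 : (0.9:ℝ) * (normF p.1)^2 < R * normF p.2)
    (hpreg2 : R * normF p.2 ≤ (1.9:ℝ) * (normF p.1)^2)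
    (hangv : angleF p.1 q.1 < d) (hangw : angleF p.2 q.2 < d)
    (hle : dist R 0 q ≤ dist R 0 p) :
    dist R p q ≤ dist R 0 p := by
  obtain ⟨hlam0, hlameq⟩ := dist_zero_spec R hR p hp2
  obtain ⟨hmu0, hmueq⟩ := dist_zero_spec R hR q hq2
  set lam : ℝ := dist R 0 p with hlamdef
  set mu : ℝ := dist R 0 q with hmudef
  clear_value lam
  clear_value mu
  have hu0 : 0 < normF p.1 := normF_pos hp1
  have ht0 : 0 < normF q.1 := normF_pos hq1
  have ha0 : 0 < normF p.2 := normF_pos hp2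
  have hb0 : 0 < normF q.2 := normF_pos hq2
  have hd0 : 0 < d := lt_of_le_of_lt (Real.arccos_nonneg _) hangv
  have hIv := innerF_ge_of_angle_lt hp1 hq1 (by linarith) hangv
  have hIw := innerF_ge_of_angle_lt hp2 hq2 (by linarith) hangw
  have hc1 : 1 - d^2 ≤ Real.cos d := by
    have hsin : Real.sin d ≤ d := le_of_lt (Real.sin_lt hd0)
    have hsin0 : 0 ≤ Real.sin d :=
      Real.sin_nonneg_of_nonneg_of_le_pi (le_of_lt hd0) (by linarith [Real.pi_gt_three])
    have hc0 : 0 ≤ Real.cos d :=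
      Real.cos_nonneg_of_mem_Icc ⟨by linarith [Real.pi_gt_three], by linarith [Real.pi_gt_three]⟩
    nlinarith [Real.sin_sq_add_cos_sq d, Real.cos_le_one d]
  have hIv' : (1 - d^2) * (normF p.1 * normF q.1) ≤ innerF p.1 q.1 :=
    le_trans (mul_le_mul_of_nonneg_right hc1 (le_of_lt (mul_pos hu0 ht0))) hIv
  have hIw' : (1 - d^2) * (normF p.2 * normF q.2) ≤ innerF p.2 q.2 :=
    le_trans (mul_le_mul_of_nonneg_right hc1 (le_of_lt (mul_pos ha0 hb0))) hIw
  clear hIv hIw hangv hangw hc1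
  have hl4 : (0:ℝ) < lam^4 := by positivity
  have hnorm : normSq (dil (1/lam) (mul (inv p) q)) ≤ R^2 := by
    rw [normSq_dil_mul]
    set V : ℝ := ∑ i, (q.1 i - p.1 i)^2 with hVdef
    set W : ℝ := ∑ ij : UT r, (q.2 ij - p.2 ij
        + (q.1 ij.1.1 * p.1 ij.1.2 - p.1 ij.1.1 * q.1 ij.1.2)/2)^2 with hWdef
    suffices hfin : V * lam^2 + W ≤ R^2 * lam^4 by
      have e : ((1/lam)^2 * V + (1/lam)^4 * W) * lam^4 = V*lam^2 + W := by
        field_simp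
      have h' : ((1/lam)^2*V + (1/lam)^4*W)*lam^4 ≤ R^2*lam^4 := by
        rw [e]; exact hfin
      exact le_of_mul_le_mul_right h' hl4
    have hV : V = (normF q.1)^2 + (normF p.1)^2 - 2*innerF p.1 q.1 := by
      rw [hVdef, normF_sq, normF_sq]
      simp only [innerF]
      rw [Finset.mul_sum, ← Finset.sum_add_distrib, ← Finset.sum_sub_distrib]
      exact Finset.sum_congr rfl fun i _ => by ring
    have hD : (∑ ij : UT r, (q.2 ij - p.2 ij)^2)
        = (normF q.2)^2 + (normF p.2)^2 - 2*innerF p.2 q.2 := by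
      rw [normF_sq, normF_sq]
      simp only [innerF]
      rw [Finset.mul_sum, ← Finset.sum_add_distrib, ← Finset.sum_sub_distrib]
      exact Finset.sum_congr rfl fun ij _ => by ring
    set D : ℝ := ∑ ij : UT r, (q.2 ij - p.2 ij)^2 with hDdef
    set S : ℝ := ∑ ij : UT r, (q.2 ij - p.2 ij) *
        ((q.1 ij.1.1 * p.1 ij.1.2 - p.1 ij.1.1 * q.1 ij.1.2)/2) with hSdef
    set C2 : ℝ := ∑ ij : UT r, ((q.1 ij.1.1 * p.1 ij.1.2 - p.1 ij.1.1 * q.1 ij.1.2)/2)^2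
      with hC2def
    have hW : W = D + 2*S + C2 := by
      rw [hWdef, hDdef, hSdef, hC2def, Finset.mul_sum, ← Finset.sum_add_distrib,
        ← Finset.sum_add_distrib]
      exact Finset.sum_congr rfl fun ij _ => by ring
    have hC20 : 0 ≤ C2 := hC2def ▸ Finset.sum_nonneg fun ij _ => sq_nonneg _
    have hS2 : S^2 ≤ D * C2 := by
      rw [hSdef, hDdef, hC2def]
      exact Finset.sum_mul_sq_le_sq_mul_sq Finset.univ _ _
    have hC2b : C2 ≤ (1/2) * ((normF q.1)^2*(normF p.1)^2 - (innerF p.1 q.1)^2) := by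
      have e1 : C2 = (1/4) * ∑ ij : UT r,
          (q.1 (ij:Fin r × Fin r).1 * p.1 (ij:Fin r × Fin r).2
            - p.1 (ij:Fin r × Fin r).1 * q.1 (ij:Fin r × Fin r).2)^2 := by
        rw [hC2def, Finset.mul_sum]
        exact Finset.sum_congr rfl fun ij _ => by ring
      have e2 : ∑ ij : UT r,
          (q.1 (ij:Fin r × Fin r).1 * p.1 (ij:Fin r × Fin r).2
            - p.1 (ij:Fin r × Fin r).1 * q.1 (ij:Fin r × Fin r).2)^2
          ≤ ∑ y : Fin r × Fin r, (q.1 y.1 * p.1 y.2 - p.1 y.1 * q.1 y.2)^2 := by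
        rw [← Finset.sum_subtype
          (Finset.univ.filter fun y : Fin r × Fin r => y.1 < y.2)
          (fun y => by simp)
          (fun y : Fin r × Fin r => (q.1 y.1 * p.1 y.2 - p.1 y.1 * q.1 y.2)^2)]
        exact Finset.sum_le_sum_of_subset_of_nonneg (Finset.filter_subset _ _)
          (fun y _ _ => sq_nonneg _)
      have e3 : ∑ y : Fin r × Fin r, (q.1 y.1 * p.1 y.2 - p.1 y.1 * q.1 y.2)^2
          = 2*((∑ i, q.1 i ^2) * (∑ i, p.1 i ^2) - (∑ i, q.1 i * p.1 i)^2) := by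
        rw [Fintype.sum_prod_type]
        exact lagrangeF q.1 p.1
      have e4 : ∑ i, q.1 i * p.1 i = innerF p.1 q.1 := by
        simp only [innerF]
        exact Finset.sum_congr rfl fun i _ => mul_comm _ _
      have e5 : (∑ i, q.1 i ^2) * (∑ i, p.1 i ^2) = (normF q.1)^2 * (normF p.1)^2 := by
        rw [normF_sq, normF_sq]
      rw [e1]
      rw [e4, e5] at e3
      linarith [e2, e3.le, e3.ge]
    have harith := arith (V := V) (D := D) (S := S) (C2 := C2)
      hR hd0 hd1 hdR hu0 ht0 ha0 hb0 hlam0 hmu0 hlameq hmueq hle hpreg1 hpreg2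
      hIv' hIw' (by linarith [hV]) (by linarith [hD]) hS2 (by linarith [hC2b]) hC20
    linarith [hW, harith]
  exact dist_le R p q hlam0 hnorm

end Fr2

/-- Lemma for points in the intermediate region `𝓟_a \ 𝓟_{a'}`, `a = 0.9`, `a' = 1.9`. -/
theorem statement16 (r : ℕ) (hr : 2 ≤ r) (R : ℝ) (hR : 0 < R) :
    ∃ δ : ℝ, 0 < δ ∧ ∀ p q : Fr2.G r,
      p.1 ≠ 0 → q.1 ≠ 0 → p.2 ≠ 0 → q.2 ≠ 0 →
      ((0.9 : ℝ) * (normF p.1) ^ 2 < R * normF p.2 ∧ R * normF p.2 ≤ (1.9 : ℝ) * (normF p.1) ^ 2) →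
      ((0.9 : ℝ) * (normF q.1) ^ 2 < R * normF q.2 ∧ R * normF q.2 ≤ (1.9 : ℝ) * (normF q.1) ^ 2) →
      angleF p.1 q.1 < δ → angleF p.2 q.2 < δ →
      Fr2.dist R p q ≤ Fr2.dist R 0 p ∨ Fr2.dist R p q ≤ Fr2.dist R 0 q := by
  refine ⟨min (1/10) (1/(56*R)), lt_min (by norm_num) (by positivity), ?_⟩
  intro p q hp1 hq1 hp2 hq2 hpreg hqreg hangv hangw
  have hd1 : min (1/10 : ℝ) (1/(56*R)) ≤ 1/10 := min_le_left _ _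
  have hdR : (min (1/10 : ℝ) (1/(56*R))) * R ≤ 1/56 := by
    have h := mul_le_mul_of_nonneg_right (min_le_right (1/10 : ℝ) (1/(56*R))) (le_of_lt hR)
    have e : (1/(56*R))*R = 1/56 := by field_simp
    rw [e] at h
    exact h
  rcases le_total (Fr2.dist R 0 q) (Fr2.dist R 0 p) with h | h
  · exact Or.inl (Fr2.key hR hd1 hdR p q hp1 hq1 hp2 hq2 hpreg.1 hpreg.2 hangv hangw h)
  · right
    rw [Fr2.dist_symm]
    exact Fr2.key hR hd1 hdR q p hq1 hp1 hq2 hp2 hqreg.1 hqreg.2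
      (by rw [angleF_comm]; exact hangv) (by rw [angleF_comm]; exact hangw) h
end
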